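/- Let (P, A, →) be a labelled transition system with P and A finite, I = P, and let D(p) = ⋀_{a ∈ A} ⋀_{p' : p →a p'} ⟨a⟩X_{p'} and D̃(p) = ⋀_{a ∈ A} [a] ⋁_{p' : p →a p'} X_{p'} be declarations in Hennessy–Milner logic with variables indexed by P. Define F by (p,q) ∈ F(S) iff for all a, p' with p →a p' there exists q' with q →a q' and (p',q') ∈ S, F̃(S) = (F(S⁻¹))⁻¹, and bisimilarity ∼_bisim = ν(F ∩ F̃) where (F ∩ F̃)(S) = F(S) ∩ F̃(S). Let D_bisim(p) = D(p) ∧ D̃(p). Then D_bisim characterizes ∼_bisim: for all p, q ∈ P, p ∼_bisim q if and only if q ∈ (νV⟦D_bisim⟧)(p). -/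

import Mathlib

/-- Formulas of Hennessy–Milner logic over actions A with variables indexed by I. -/
inductive Formula (A I : Type*) where
  | tt : Formula A I
  | ff : Formula A I
  | var : I → Formula A I
  | and : Formula A I → Formula A I → Formula A I
  | or : Formula A I → Formula A I → Formula A I
  | dia : A → Formula A I → Formula A I
  | box : A → Formula A I → Formula A I

/-- The semantics V⟦F⟧σ of a formula relative to an LTS (P, A, Tr) and a
variable interpretation σ : I → 𝒫(P). -/
def sem {P A I : Type*} (Tr : P → A → P → Prop) : Formula A I → (I → Set P) → Set P
  | .tt, _ => Set.univ
  | .ff, _ => ∅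
  | .var i, σ => σ i
  | .and f g, σ => sem Tr f σ ∩ sem Tr g σ
  | .or f g, σ => sem Tr f σ ∪ sem Tr g σ
  | .dia a f, σ => {p | ∃ q, Tr p a q ∧ q ∈ sem Tr f σ}
  | .box a f, σ => {p | ∀ q, Tr p a q → q ∈ sem Tr f σ}

/-- The derived function V⟦D⟧ of a declaration D : I → Formulas:
(V⟦D⟧σ)(i) = V⟦D(i)⟧σ. -/
def declSem {P A I : Type*} (Tr : P → A → P → Prop) (D : I → Formula A I) :
    (I → Set P) → (I → Set P) := fun σ i => sem Tr (D i) σ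

/-- Finite conjunction of a list of formulas. -/
def bigAnd {A I : Type*} : List (Formula A I) → Formula A I
  | [] => .tt
  | f :: fs => .and f (bigAnd fs)

/-- Finite disjunction of a list of formulas. -/
def bigOr {A I : Type*} : List (Formula A I) → Formula A I
  | [] => .ff
  | f :: fs => .or f (bigOr fs)

/-- The declaration D(p) = ⋀_{a ∈ A} ⋀_{p' : p →a p'} ⟨a⟩X_{p'}. -/
noncomputable def Dsim {P A : Type*} [Fintype P] [Fintype A] (Tr : P → A → P → Prop)
    [∀ p a p', Decidable (Tr p a p')] (p : P) : Formula A P :=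
  bigAnd ((Finset.univ : Finset A).toList.map fun a =>
    bigAnd (((Finset.univ : Finset P).filter (fun p' => Tr p a p')).toList.map fun p' =>
      .dia a (.var p')))

/-- The declaration D̃(p) = ⋀_{a ∈ A} [a] ⋁_{p' : p →a p'} X_{p'}. -/
noncomputable def Dop {P A : Type*} [Fintype P] [Fintype A] (Tr : P → A → P → Prop)
    [∀ p a p', Decidable (Tr p a p')] (p : P) : Formula A P :=
  bigAnd ((Finset.univ : Finset A).toList.map fun a =>
    .box a (bigOr (((Finset.univ : Finset P).filter (fun p' => Tr p a p')).toList.map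
      fun p' => .var p')))

/-- The simulation functional: (p,q) ∈ F(S) iff every transition p →a p' is
matched by some q →a q' with (p',q') ∈ S. -/
def Fsim {P A : Type*} (Tr : P → A → P → Prop) (S : Set (P × P)) : Set (P × P) :=
  {pq | ∀ (a : A) (p' : P), Tr pq.1 a p' → ∃ q' : P, Tr pq.2 a q' ∧ (p', q') ∈ S}

/-- The inverse of a binary relation, `S⁻¹ = {(q,p) | (p,q) ∈ S}`. -/
def relInv {P : Type*} (S : Set (P × P)) : Set (P × P) := {x | (x.2, x.1) ∈ S}

/-- F̃(S) = (F(S⁻¹))⁻¹ for the simulation functional F. -/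
def Fop {P A : Type*} (Tr : P → A → P → Prop) (S : Set (P × P)) : Set (P × P) :=
  relInv (Fsim Tr (relInv S))

/-- The variable interpretation σ_S(p) = {q | (p,q) ∈ S} associated to a relation S. -/
def sigmaOf {P : Type*} (S : Set (P × P)) : P → Set P := fun p => {q | (p, q) ∈ S}

/-- The greatest fixed point of a monotone endofunction of a complete lattice,
given by the Knaster–Tarski construction. -/
def nu {α : Type*} [CompleteLattice α] (f : α → α) : α := sSup {x | x ≤ f x}

lemma sem_bigAnd {P A I : Type*} (Tr : P → A → P → Prop) (L : List (Formula A I))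
    (σ : I → Set P) (q : P) :
    q ∈ sem Tr (bigAnd L) σ ↔ ∀ f ∈ L, q ∈ sem Tr f σ := by
  induction L with
  | nil => simp [bigAnd, sem]
  | cons f fs ih => simp [bigAnd, sem, ih]

lemma sem_bigOr {P A I : Type*} (Tr : P → A → P → Prop) (L : List (Formula A I))
    (σ : I → Set P) (q : P) :
    q ∈ sem Tr (bigOr L) σ ↔ ∃ f ∈ L, q ∈ sem Tr f σ := by
  induction L with
  | nil => simp [bigOr, sem]
  | cons f fs ih => simp [bigOr, sem, ih]

lemma sem_Dsim {P A : Type*} [Fintype P] [Fintype A] (Tr : P → A → P → Prop)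
    [∀ p a p', Decidable (Tr p a p')] (p q : P) (σ : P → Set P) :
    q ∈ sem Tr (Dsim Tr p) σ ↔
      ∀ (a : A) (p' : P), Tr p a p' → ∃ q', Tr q a q' ∧ q' ∈ σ p' := by
  rw [Dsim, sem_bigAnd]
  constructor
  · intro h a p' hp'
    have h1 := h _ (List.mem_map_of_mem (Finset.mem_toList.2 (Finset.mem_univ a)))
    rw [sem_bigAnd] at h1
    have h2 := h1 _ (List.mem_map_of_mem (Finset.mem_toList.2
      (Finset.mem_filter.2 ⟨Finset.mem_univ p', hp'⟩)))
    simpa [sem] using h2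
  · intro h f hf
    rw [List.mem_map] at hf
    obtain ⟨a, -, rfl⟩ := hf
    rw [sem_bigAnd]
    intro g hg
    rw [List.mem_map] at hg
    obtain ⟨p', hp', rfl⟩ := hg
    rw [Finset.mem_toList, Finset.mem_filter] at hp'
    simpa [sem] using h a p' hp'.2

lemma sem_Dop {P A : Type*} [Fintype P] [Fintype A] (Tr : P → A → P → Prop)
    [∀ p a p', Decidable (Tr p a p')] (p q : P) (σ : P → Set P) :
    q ∈ sem Tr (Dop Tr p) σ ↔
      ∀ (a : A) (q' : P), Tr q a q' → ∃ p', Tr p a p' ∧ q' ∈ σ p' := by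
  rw [Dop, sem_bigAnd]
  constructor
  · intro h a q' hq'
    have h1 := h _ (List.mem_map_of_mem (Finset.mem_toList.2 (Finset.mem_univ a)))
    simp only [sem, Set.mem_setOf_eq] at h1
    have h2 := h1 q' hq'
    rw [sem_bigOr] at h2
    obtain ⟨f, hf, hq⟩ := h2
    rw [List.mem_map] at hf
    obtain ⟨p', hp', rfl⟩ := hf
    rw [Finset.mem_toList, Finset.mem_filter] at hp'
    exact ⟨p', hp'.2, by simpa [sem] using hq⟩
  · intro h f hf
    rw [List.mem_map] at hf
    obtain ⟨a, -, rfl⟩ := hf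
    simp only [sem, Set.mem_setOf_eq]
    intro q' hq'
    obtain ⟨p', hp', hσ⟩ := h a q' hq'
    rw [sem_bigOr]
    exact ⟨.var p', List.mem_map_of_mem (Finset.mem_toList.2
      (Finset.mem_filter.2 ⟨Finset.mem_univ p', hp'⟩)), by simpa [sem] using hσ⟩

lemma key {P A : Type*} [Fintype P] [Fintype A] (Tr : P → A → P → Prop)
    [∀ p a p', Decidable (Tr p a p')] (S : Set (P × P)) (p q : P) :
    (p, q) ∈ Fsim Tr S ∩ Fop Tr S ↔
      q ∈ declSem Tr (fun p => Formula.and (Dsim Tr p) (Dop Tr p)) (sigmaOf S) p := by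
  simp only [declSem, sem, Set.mem_inter_iff, sem_Dsim, sem_Dop, Fsim, Fop, relInv,
    Fsim, sigmaOf, Set.mem_setOf_eq]

/-- For a finite LTS, the declaration
D_bisim(p) = D(p) ∧ D̃(p) characterizes bisimilarity
∼_bisim = ν(F ∩ F̃), where (F ∩ F̃)(S) = F(S) ∩ F̃(S). -/
theorem stmt15 {P A : Type*} [Fintype P] [Fintype A] (Tr : P → A → P → Prop)
    [∀ p a p', Decidable (Tr p a p')] :
    ∀ p q : P,
      (p, q) ∈ nu (fun S : Set (P × P) => Fsim Tr S ∩ Fop Tr S) ↔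
        q ∈ nu (declSem Tr (fun p => Formula.and (Dsim Tr p) (Dop Tr p))) p := by
  intro p q
  simp only [nu, Set.sSup_eq_sUnion, Set.mem_sUnion, sSup_apply, Set.iSup_eq_iUnion,
    Set.mem_iUnion, Set.mem_setOf_eq]
  constructor
  · rintro ⟨S, hS, hpq⟩
    refine ⟨⟨sigmaOf S, ?_⟩, hpq⟩
    intro p' q' hq'
    exact (key Tr S p' q').1 (hS hq')
  · rintro ⟨⟨σ, hσ⟩, hq⟩
    refine ⟨{x | x.2 ∈ σ x.1}, ?_, hq⟩
    rintro ⟨p', q'⟩ hq'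
    exact (key Tr {x | x.2 ∈ σ x.1} p' q').2 (hσ p' hq')
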